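/- The subgroup of S₂₄ generated by σ₀ = (1,3,8)(2,7,4)(5,14,9)(6,15,10)(11,16,12)(13,19,17)(18,23,20)(21,22,24) and σ₁ = (1,2)(3,5)(4,6)(7,11)(8,12)(9,13)(10,14)(15,17)(16,18)(19,21)(20,22)(23,24) has order 288 and trivial center. -/

import Mathlib

/-- Monodromy permutation above `j = 0` in case II, acting on `{1, …, 24} ⊂ Fin 25`. -/
def caseII_σ₀ : Equiv.Perm (Fin 25) :=
  c[1, 3, 8] * c[2, 7, 4] * c[5, 14, 9] * c[6, 15, 10] *
  c[11, 16, 12] * c[13, 19, 17] * c[18, 23, 20] * c[21, 22, 24]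

/-- Monodromy permutation above `j = 1728` in case II. -/
def caseII_σ₁ : Equiv.Perm (Fin 25) :=
  c[1, 2] * c[3, 5] * c[4, 6] * c[7, 11] * c[8, 12] * c[9, 13] *
  c[10, 14] * c[15, 17] * c[16, 18] * c[19, 21] * c[20, 22] * c[23, 24]

/-- The monodromy group of case II, generated by `σ₀` and `σ₁`. -/
def caseII_G : Subgroup (Equiv.Perm (Fin 25)) :=
  Subgroup.closure ({caseII_σ₀, caseII_σ₁} : Set (Equiv.Perm (Fin 25)))

/-
We encode permutations of `Fin 25` as natural numbers in base 32 (25 digits, digit `i`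
being the image of `i`), and do all the group-theoretic computations on these codes
with fast kernel `Nat` arithmetic.
-/

set_option maxHeartbeats 2000000 in
private def caseII_words : List (List Bool) := [[],
[false],
[true],
[false,false],
[false,true],
[true,false],
[false,false,true],
[false,true,false],
[true,false,false],
[true,false,true],
[false,false,true,false],
[false,true,false,false],
[false,true,false,true],
[true,false,false,true],
[true,false,true,false],
[false,false,true,false,false],
[false,false,true,false,true],
[false,true,false,false,true],
[false,true,false,true,false],
[true,false,false,true,false],
[true,false,true,false,false],
[true,false,true,false,true],
[false,false,true,false,false,true],
[false,false,true,false,true,false],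
[false,true,false,false,true,false],
[false,true,false,true,false,false],
[false,true,false,true,false,true],
[true,false,false,true,false,false],
[true,false,false,true,false,true],
[true,false,true,false,false,true],
[true,false,true,false,true,false],
[false,false,true,false,false,true,false],
[false,false,true,false,true,false,false],
[false,false,true,false,true,false,true],
[false,true,false,false,true,false,false],
[false,true,false,false,true,false,true],
[false,true,false,true,false,false,true],
[false,true,false,true,false,true,false],
[true,false,false,true,false,false,true],
[true,false,false,true,false,true,false],
[true,false,true,false,false,true,false],
[true,false,true,false,true,false,false],
[true,false,true,false,true,false,true],
[false,false,true,false,false,true,false,false],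
[false,false,true,false,false,true,false,true],
[false,false,true,false,true,false,false,true],
[false,false,true,false,true,false,true,false],
[false,true,false,false,true,false,false,true],
[false,true,false,false,true,false,true,false],
[false,true,false,true,false,false,true,false],
[false,true,false,true,false,true,false,false],
[false,true,false,true,false,true,false,true],
[true,false,false,true,false,false,true,false],
[true,false,false,true,false,true,false,false],
[true,false,false,true,false,true,false,true],
[true,false,true,false,false,true,false,false],
[true,false,true,false,false,true,false,true],
[true,false,true,false,true,false,false,true],
[true,false,true,false,true,false,true,false],
[false,false,true,false,false,true,false,false,true],
[false,false,true,false,false,true,false,true,false],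
[false,false,true,false,true,false,false,true,false],
[false,false,true,false,true,false,true,false,false],
[false,false,true,false,true,false,true,false,true],
[false,true,false,false,true,false,false,true,false],
[false,true,false,false,true,false,true,false,false],
[false,true,false,false,true,false,true,false,true],
[false,true,false,true,false,false,true,false,false],
[false,true,false,true,false,false,true,false,true],
[false,true,false,true,false,true,false,false,true],
[false,true,false,true,false,true,false,true,false],
[true,false,false,true,false,false,true,false,false],
[true,false,false,true,false,false,true,false,true],
[true,false,false,true,false,true,false,false,true],
[true,false,false,true,false,true,false,true,false],
[true,false,true,false,false,true,false,false,true],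
[true,false,true,false,false,true,false,true,false],
[true,false,true,false,true,false,false,true,false],
[true,false,true,false,true,false,true,false,false],
[true,false,true,false,true,false,true,false,true],
[false,false,true,false,false,true,false,false,true,false],
[false,false,true,false,false,true,false,true,false,false],
[false,false,true,false,false,true,false,true,false,true],
[false,false,true,false,true,false,false,true,false,false],
[false,false,true,false,true,false,false,true,false,true],
[false,false,true,false,true,false,true,false,false,true],
[false,false,true,false,true,false,true,false,true,false],
[false,true,false,false,true,false,false,true,false,false],
[false,true,false,false,true,false,false,true,false,true],
[false,true,false,false,true,false,true,false,false,true],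
[false,true,false,false,true,false,true,false,true,false],
[false,true,false,true,false,false,true,false,false,true],
[false,true,false,true,false,false,true,false,true,false],
[false,true,false,true,false,true,false,false,true,false],
[false,true,false,true,false,true,false,true,false,false],
[false,true,false,true,false,true,false,true,false,true],
[true,false,false,true,false,false,true,false,false,true],
[true,false,false,true,false,true,false,false,true,false],
[true,false,false,true,false,true,false,true,false,true],
[true,false,true,false,false,true,false,true,false,false],
[true,false,true,false,false,true,false,true,false,true],
[true,false,true,false,true,false,false,true,false,true],
[true,false,true,false,true,false,true,false,false,true],
[true,false,true,false,true,false,true,false,true,false],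
[false,false,true,false,false,true,false,false,true,false,false],
[false,false,true,false,false,true,false,false,true,false,true],
[false,false,true,false,false,true,false,true,false,false,true],
[false,false,true,false,false,true,false,true,false,true,false],
[false,false,true,false,true,false,false,true,false,false,true],
[false,false,true,false,true,false,false,true,false,true,false],
[false,false,true,false,true,false,true,false,false,true,false],
[false,false,true,false,true,false,true,false,true,false,false],
[false,false,true,false,true,false,true,false,true,false,true],
[false,true,false,false,true,false,false,true,false,false,true],
[false,true,false,false,true,false,true,false,false,true,false],
[false,true,false,false,true,false,true,false,true,false,true],
[false,true,false,true,false,false,true,false,true,false,false],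
[false,true,false,true,false,false,true,false,true,false,true],
[false,true,false,true,false,true,false,false,true,false,true],
[false,true,false,true,false,true,false,true,false,false,true],
[false,true,false,true,false,true,false,true,false,true,false],
[true,false,false,true,false,false,true,false,false,true,false],
[true,false,false,true,false,true,false,false,true,false,false],
[true,false,false,true,false,true,false,false,true,false,true],
[true,false,false,true,false,true,false,true,false,true,false],
[true,false,true,false,false,true,false,true,false,false,true],
[true,false,true,false,false,true,false,true,false,true,false],
[true,false,true,false,true,false,false,true,false,true,false],
[true,false,true,false,true,false,true,false,false,true,false],
[true,false,true,false,true,false,true,false,true,false,false],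
[true,false,true,false,true,false,true,false,true,false,true],
[false,false,true,false,false,true,false,false,true,false,false,true],
[false,false,true,false,false,true,false,true,false,false,true,false],
[false,false,true,false,false,true,false,true,false,true,false,true],
[false,false,true,false,true,false,false,true,false,true,false,false],
[false,false,true,false,true,false,false,true,false,true,false,true],
[false,false,true,false,true,false,true,false,false,true,false,true],
[false,false,true,false,true,false,true,false,true,false,false,true],
[false,false,true,false,true,false,true,false,true,false,true,false],
[false,true,false,false,true,false,false,true,false,false,true,false],
[false,true,false,false,true,false,true,false,false,true,false,false],
[false,true,false,false,true,false,true,false,false,true,false,true],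
[false,true,false,false,true,false,true,false,true,false,true,false],
[false,true,false,true,false,false,true,false,true,false,false,true],
[false,true,false,true,false,false,true,false,true,false,true,false],
[false,true,false,true,false,true,false,false,true,false,true,false],
[false,true,false,true,false,true,false,true,false,false,true,false],
[false,true,false,true,false,true,false,true,false,true,false,false],
[false,true,false,true,false,true,false,true,false,true,false,true],
[true,false,false,true,false,false,true,false,false,true,false,false],
[true,false,false,true,false,false,true,false,false,true,false,true],
[true,false,false,true,false,true,false,false,true,false,false,true],
[true,false,false,true,false,true,false,false,true,false,true,false],
[true,false,false,true,false,true,false,true,false,true,false,false],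
[true,false,false,true,false,true,false,true,false,true,false,true],
[true,false,true,false,false,true,false,true,false,false,true,false],
[true,false,true,false,false,true,false,true,false,true,false,true],
[true,false,true,false,true,false,false,true,false,true,false,false],
[true,false,true,false,true,false,false,true,false,true,false,true],
[true,false,true,false,true,false,true,false,false,true,false,true],
[true,false,true,false,true,false,true,false,true,false,false,true],
[true,false,true,false,true,false,true,false,true,false,true,false],
[false,false,true,false,false,true,false,false,true,false,false,true,false],
[false,false,true,false,false,true,false,true,false,false,true,false,false],
[false,false,true,false,false,true,false,true,false,false,true,false,true],
[false,false,true,false,false,true,false,true,false,true,false,true,false],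
[false,false,true,false,true,false,false,true,false,true,false,false,true],
[false,false,true,false,true,false,false,true,false,true,false,true,false],
[false,false,true,false,true,false,true,false,false,true,false,true,false],
[false,false,true,false,true,false,true,false,true,false,false,true,false],
[false,false,true,false,true,false,true,false,true,false,true,false,false],
[false,false,true,false,true,false,true,false,true,false,true,false,true],
[false,true,false,false,true,false,false,true,false,false,true,false,false],
[false,true,false,false,true,false,false,true,false,false,true,false,true],
[false,true,false,false,true,false,true,false,false,true,false,false,true],
[false,true,false,false,true,false,true,false,false,true,false,true,false],
[false,true,false,false,true,false,true,false,true,false,true,false,false],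
[false,true,false,false,true,false,true,false,true,false,true,false,true],
[false,true,false,true,false,false,true,false,true,false,false,true,false],
[false,true,false,true,false,false,true,false,true,false,true,false,true],
[false,true,false,true,false,true,false,false,true,false,true,false,false],
[false,true,false,true,false,true,false,false,true,false,true,false,true],
[false,true,false,true,false,true,false,true,false,false,true,false,true],
[false,true,false,true,false,true,false,true,false,true,false,false,true],
[false,true,false,true,false,true,false,true,false,true,false,true,false],
[true,false,false,true,false,false,true,false,false,true,false,false,true],
[true,false,false,true,false,true,false,false,true,false,true,false,false],
[true,false,false,true,false,true,false,false,true,false,true,false,true],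
[true,false,false,true,false,true,false,true,false,true,false,false,true],
[true,false,false,true,false,true,false,true,false,true,false,true,false],
[true,false,true,false,false,true,false,true,false,false,true,false,false],
[true,false,true,false,false,true,false,true,false,false,true,false,true],
[true,false,true,false,false,true,false,true,false,true,false,true,false],
[true,false,true,false,true,false,false,true,false,true,false,false,true],
[true,false,true,false,true,false,true,false,true,false,false,true,false],
[true,false,true,false,true,false,true,false,true,false,true,false,false],
[true,false,true,false,true,false,true,false,true,false,true,false,true],
[false,false,true,false,false,true,false,false,true,false,false,true,false,false],
[false,false,true,false,false,true,false,false,true,false,false,true,false,true],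
[false,false,true,false,false,true,false,true,false,false,true,false,false,true],
[false,false,true,false,false,true,false,true,false,false,true,false,true,false],
[false,false,true,false,false,true,false,true,false,true,false,true,false,false],
[false,false,true,false,false,true,false,true,false,true,false,true,false,true],
[false,false,true,false,true,false,false,true,false,true,false,false,true,false],
[false,false,true,false,true,false,false,true,false,true,false,true,false,true],
[false,false,true,false,true,false,true,false,false,true,false,true,false,false],
[false,false,true,false,true,false,true,false,false,true,false,true,false,true],
[false,false,true,false,true,false,true,false,true,false,false,true,false,true],
[false,false,true,false,true,false,true,false,true,false,true,false,false,true],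
[false,false,true,false,true,false,true,false,true,false,true,false,true,false],
[false,true,false,false,true,false,false,true,false,false,true,false,false,true],
[false,true,false,false,true,false,true,false,false,true,false,true,false,false],
[false,true,false,false,true,false,true,false,false,true,false,true,false,true],
[false,true,false,false,true,false,true,false,true,false,true,false,false,true],
[false,true,false,false,true,false,true,false,true,false,true,false,true,false],
[false,true,false,true,false,false,true,false,true,false,false,true,false,false],
[false,true,false,true,false,false,true,false,true,false,false,true,false,true],
[false,true,false,true,false,false,true,false,true,false,true,false,true,false],
[false,true,false,true,false,true,false,false,true,false,true,false,false,true],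
[false,true,false,true,false,true,false,true,false,true,false,false,true,false],
[false,true,false,true,false,true,false,true,false,true,false,true,false,false],
[false,true,false,true,false,true,false,true,false,true,false,true,false,true],
[true,false,false,true,false,false,true,false,false,true,false,false,true,false],
[true,false,false,true,false,true,false,false,true,false,true,false,false,true],
[true,false,false,true,false,true,false,false,true,false,true,false,true,false],
[true,false,false,true,false,true,false,true,false,true,false,true,false,false],
[true,false,false,true,false,true,false,true,false,true,false,true,false,true],
[true,false,true,false,false,true,false,true,false,false,true,false,false,true],
[true,false,true,false,false,true,false,true,false,false,true,false,true,false],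
[true,false,true,false,false,true,false,true,false,true,false,true,false,true],
[true,false,true,false,true,false,false,true,false,true,false,false,true,false],
[true,false,true,false,true,false,true,false,true,false,false,true,false,true],
[true,false,true,false,true,false,true,false,true,false,true,false,false,true],
[true,false,true,false,true,false,true,false,true,false,true,false,true,false],
[false,false,true,false,false,true,false,true,false,false,true,false,true,false,false],
[false,false,true,false,false,true,false,true,false,false,true,false,true,false,true],
[false,false,true,false,false,true,false,true,false,true,false,true,false,false,true],
[false,false,true,false,false,true,false,true,false,true,false,true,false,true,false],
[false,false,true,false,true,false,false,true,false,true,false,false,true,false,false],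
[false,false,true,false,true,false,false,true,false,true,false,false,true,false,true],
[false,false,true,false,true,false,false,true,false,true,false,true,false,true,false],
[false,false,true,false,true,false,true,false,false,true,false,true,false,false,true],
[false,false,true,false,true,false,true,false,true,false,true,false,false,true,false],
[false,false,true,false,true,false,true,false,true,false,true,false,true,false,false],
[false,false,true,false,true,false,true,false,true,false,true,false,true,false,true],
[false,true,false,false,true,false,false,true,false,false,true,false,false,true,false],
[false,true,false,false,true,false,true,false,false,true,false,true,false,false,true],
[false,true,false,false,true,false,true,false,false,true,false,true,false,true,false],
[false,true,false,false,true,false,true,false,true,false,true,false,true,false,false],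
[false,true,false,false,true,false,true,false,true,false,true,false,true,false,true],
[false,true,false,true,false,false,true,false,true,false,false,true,false,false,true],
[false,true,false,true,false,false,true,false,true,false,false,true,false,true,false],
[false,true,false,true,false,false,true,false,true,false,true,false,true,false,true],
[false,true,false,true,false,true,false,false,true,false,true,false,false,true,false],
[false,true,false,true,false,true,false,true,false,true,false,false,true,false,true],
[false,true,false,true,false,true,false,true,false,true,false,true,false,false,true],
[true,false,false,true,false,false,true,false,false,true,false,false,true,false,true],
[true,false,false,true,false,true,false,false,true,false,true,false,true,false,true],
[true,false,false,true,false,true,false,true,false,true,false,true,false,false,true],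
[true,false,false,true,false,true,false,true,false,true,false,true,false,true,false],
[true,false,true,false,false,true,false,true,false,false,true,false,true,false,true],
[true,false,true,false,true,false,false,true,false,true,false,false,true,false,false],
[true,false,true,false,true,false,false,true,false,true,false,false,true,false,true],
[true,false,true,false,true,false,true,false,true,false,true,false,true,false,false],
[false,false,true,false,false,true,false,true,false,false,true,false,true,false,false,true],
[false,false,true,false,false,true,false,true,false,false,true,false,true,false,true,false],
[false,false,true,false,false,true,false,true,false,true,false,true,false,true,false,false],
[false,false,true,false,false,true,false,true,false,true,false,true,false,true,false,true],
[false,false,true,false,true,false,false,true,false,true,false,false,true,false,false,true],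
[false,false,true,false,true,false,false,true,false,true,false,false,true,false,true,false],
[false,false,true,false,true,false,false,true,false,true,false,true,false,true,false,true],
[false,false,true,false,true,false,true,false,false,true,false,true,false,false,true,false],
[false,false,true,false,true,false,true,false,true,false,true,false,false,true,false,true],
[false,false,true,false,true,false,true,false,true,false,true,false,true,false,false,true],
[false,true,false,false,true,false,false,true,false,false,true,false,false,true,false,true],
[false,true,false,false,true,false,true,false,false,true,false,true,false,true,false,true],
[false,true,false,false,true,false,true,false,true,false,true,false,true,false,false,true],
[false,true,false,false,true,false,true,false,true,false,true,false,true,false,true,false],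
[false,true,false,true,false,false,true,false,true,false,false,true,false,true,false,true],
[false,true,false,true,false,true,false,false,true,false,true,false,false,true,false,false],
[false,true,false,true,false,true,false,false,true,false,true,false,false,true,false,true],
[true,false,false,true,false,true,false,true,false,true,false,true,false,true,false,true],
[true,false,true,false,true,false,true,false,true,false,true,false,true,false,false,true],
[false,false,true,false,false,true,false,true,false,false,true,false,true,false,true,false,true],
[false,false,true,false,false,true,false,true,false,true,false,true,false,true,false,false,true],
[false,false,true,false,false,true,false,true,false,true,false,true,false,true,false,true,false],
[false,false,true,false,true,false,false,true,false,true,false,false,true,false,true,false,true],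
[false,false,true,false,true,false,true,false,false,true,false,true,false,false,true,false,true]]

set_option maxHeartbeats 2000000 in
private def caseII_VN : List ℕ := [32886290143373735477794918486186756128,
28776625136163191153434589137920597088,
31595925856368016379931805506578056256,
30018969465519668190300825042902094080,
27480952036116732938197031010910538976,
26199864077026023103806704752853920928,
24870358806091809275697543148529295488,
23620504210360418793073126240121373120,
27274801122707417322059871856878492032,
30053652648207600403079102305171477856,
18176582353764138405946419739663806752,
24447469829880325148559886542363147616,
32623632878043551893602471581215570432,
22129959299781307283569091103190069440,
20923019948015196349239032695408019776,
31046799627978321762683715422716570112,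
28468332722816124850638654893844833664,
16725911427052171388730265726877281760,
14154689659737431911151389242661428416,
12774032884819011445760360512991338912,
21620342704204236792875043719878132960,
31206300552403599212932859848991844928,
15606033311079588873731589581217251648,
8750768511016718845217691948498899424,
7368726275827111407784589151409243744,
16006250514540838006996701794453173376,
27001637730373448778680485439318596320,
32204598001520025826471122378365811264,
25638447311985054607537588808141288704,
11323242962471135860339432864565861920,
19553219482912886236058435129574645888,
19164364898323576165794880985183686176,
14754779926987051000223647543150922816,
24179458282120773364309872851674185344,
28086941637078228439542569329302677216,
22809857290547473580855835916419648544,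
1850093920360665212166109881169547680,
12985984647061694625373036769404507200,
10327896144185893223566281678989543872,
6006479813166537796078114327663532576,
4621922601152961064785459744006212256,
10736026263864902891429104355090441408,
29827706133827799561567299521590891264,
29344741675995574327379655732585895552,
17864396122398448030791567794483348576,
4461530091026097499342093222321850976,
7541938633583292966002378453837764832,
6212833398128265234325203664287128864,
3179164081414866335467259936252223904,
11051214539644850626756304343300480704,
1632503726630650601640753056263673312,
32285199937016595007087908955294370464,
13676024881339755899571744074686469600,
9518262382095737726204446142177236000,
21440437868241427391972435149734659776,
25508801370613483605451744185196001024,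
20070874978221072725761132240549762112,
3010739561063939280562052037695117600,
18264000123211475072858059839480843296,
3602782611144116181870882816959664288,
9778485654441853104919759922518054496,
1582892817613720857283071718571315968,
4161066290821258899237492503047977280,
28127384636954337541486639829235277504,
8188986775955146255380539376756603200,
5901741612881927690579664666500323424,
16052331984192886718962690219972245248,
23230392014265059689070200057834688160,
13644181713430289361872166209636718816,
9359573518321630736574577249176075424,
26117558317408727786701372773619909728,
26639394095276418346594172521476984512,
12380189680009027757348012833648589984,
6948678241658242283030342824439285408,
4797893327155707840058293003157459296,
8785532670687238763252485074958377376,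
1681262652901340972566995983945358624,
16535499576370200603631773803749158528,
3133163559134039346895735041940000288,
31127401444520213532363667153348626016,
20523496968764870396181055134268826816,
3041933147576295427359536682416333056,
14924016381777510954993248837194632864,
17696781692265808266484096679228851904,
8030215947414283704196439601740996736,
5449971665340918096409279250538670528,
23372004662594006980481166266588574976,
24058696895610896159279252652784132864,
6899919295358873049163289015045794240,
18782122985592448589415074112677220032,
11356140551352025216958706803541330432,
20660240528801324190007613734075553376,
4042819628854543420452765350110908576,
15004862530554620802039365227542790720,
9994858526241388088314043704643592608,
27395481381745286804287306344487652896,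
2191851845209070721105759829061949536,
2831483177078716956871176177374075616,
25388364453372980029051659019140607616,
8392662519256275714639098142270771360,
10688849135158552213039324295445685984,
19129925659897692256213073391467483488,
14723059058633983981996671969803125856,
28857957704880610313132039230419418272,
30924131803614134014528987588671473312,
19243142403212669458940601019826706720,
12064473405442576859301087628917023488,
1883883692440489950184094784254303616,
13846842999648294189876236110176377376,
10766652834673692990009971280821144000,
21480799938593825288318668372357591776,
5838298044308778917233327674308101728,
24648833547899440333288493984801661344,
4763169414163240454117486120494260480,
9406060433529497870464952973668204160,
22949075457120679683951497407727256128,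
20191960833768227517821132004273670592,
1462091065857727975559233502062548608,
12437426230201432786587283622855985664,
21570286526390535152399109652662859008,
30266577318651082355441009336861764032,
23014546861211390595764060287362774144,
12547397497757887041272497883532934784,
5418655266241539007654965881350741184,
20627951789768168287946523681790535040,
13545852520950245496065756128315381376,
16584623921179320691366786872987009600,
6748084733056523306442538793113573472,
9859453375278890250493708632709384704,
15397407995070306946975932112462000416,
30139528033813731157993016555426092512,
11618554066464241700735331231271736352,
5619938157660355145750148706758011456,
17334740756236499521917921757541970656,
13925985310762613965879057798087728416,
4340119162388167313563010991799286336,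
7335787787301739182262256010276167040,
16123483349492936555805396884883098656,
32797656170360452391431572317278771488,
17533954285178195822526690028652383296,
7029645487295539786053144289040083520,
2961371458758033749752456863825482208,
13813418260187000135869545480450676064,
8609481451328131952875958813673142848,
15038450005966880708613437316597920480,
18912173283919592628797822854712484096,
6127281961592850380801119879618190720,
22252424193198896376000491252081011872,
32845928032944229485086356621771356480,
32422066421305181857381981579300145760,
14014335976953901239150584049823355296,
18992572797638539357525343670678704608,
16164210294012375810895819211873370432,
8327920681019268156552482580766263968,
21902065491354383852970826719176339744,
14676165529998467248550284632601937600,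
20459526144985475686584254620090223104,
22770103634301221758750769560473157952,
2871642548711563791369850478604848832,
17582835385632057064731857663379784256,
24400171937066749447833120150391104896,
27569261421253775419645697457795479872,
25889704993337780194142306014221223136,
18822444215421634083458101112067594976,
9477900865898020037133394777628723520,
8449575228821780943613841920790116864,
20355598937517413862386986672052676320,
21521405170892395880829819759897390720,
12136475537556170606364917038772114464,
3380406425631840461834356235986751840,
16813409367035499767135888089987596736,
28937626704217302806075583755704575168,
28387730391113477635020199888105512480,
8529690877007095931913780706637646432,
12176594622975227746133920814179043648,
15206023832904965088155398308448809152,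
19993638931166558823718092484107640512,
16368251243504738733459489826977459360,
21400400284288401222652589515299239680,
13766443644496897203395852508290243968,
17381593681678292449389272044117962944,
9888903557133779377849327503969788672,
25428239822614380141498861064914580192,
31262158473916678357201763176978355552,
24788985317276807344758315323821925568,
16974491903916712317286898054321261632,
19331086322371909771356006766715560352,
7167403557053485520217901228174813696,
10887008783435263933424176190563013696,
31382595589724460257913474455573959072,
4542375645996960918572982337017625088,
1803321845286792280778498134124943904,
18961663076969308215909536409737366752,
6039378332303715921326092388293913088,
8871570500875481687693630587471880448,
24949906154297112504787154647457963104,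
31434842843900207936481900801349003712,
29932647959165057817270015528100991392,
20748550961720601893680810494252359200,
7230765602335726312872781218354093248,
21650807532711548405397738688147402208,
13425212468939111393362264279426503424,
14875379494681352848920241251394568640,
16302576268863186898191887343774191264,
8664852609713739201725788747494150496,
25558007115923601954500181942034902496,
5699932115024493549959469820422063776,
22698749609546286004229554942126861952,
27105524462160655973220188084631616000,
31348033860103055414445867451095750112,
15518088215075579029286927443393266912,
12517419712056346547647554741904856672,
19083924939552495346940810337010325888,
1962823264874787666554368565198346464,
27306361012113477578509727757698796128,
11444085595136912990676409859266127232,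
4677131584439451667307433751206781344,
12018108260204483148658698547130605696,
3213684803519136935572492294309943680,
20882900862866938584993360778292941856,
31468917095498748181031020624354808064,
27360028355514160039418973990782310688,
28636351517590635293728509280753335648,
23181349232360108807121493447361017600,
24099464151743116972128493345985502912,
11578192550537323387187611725015075136,
26240266354637257143630304056423527552,
17413112049027999436645968326242484672,
9721817509354239580271137198457921664,
11218869506307795489800919100475219040,
24139501753483782699024477986008344288,
28167097982168546081998706450689663744,
32677138046344814554137311062085668064,
22212345869657583087880643489145697408,
7456427443725751084060048513987598880,
12653149767797701088676319076528340320,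
4404698469010273614638379947104755840,
24480530808056053138848884973891984928,
2051579210362327000544523949017109856,
11154451928554053329021670098413540960,
6779320203057738968391786599532954688,
10115417213838288467301266075342683488,
14315853601303403781406359510659029088,
27529142929989135333364429732778805280,
24910517821015365197090616028833234080,
29798053500996628893243645649084393984,
17662950439237413123721777174622555808,
30674049254002508329938462468926149376,
2352610309413856914866273737150487744,
23459664341935100780106244269953961024,
25608063571027413455944486834199179552,
5570814376806911000065106900423476288,
1713146661682183454703295175763628288,
31156852012089874785105759890311255680,
29876587180132817539934596434962286240,
28898279291032230469532357773487218816,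
23492765970148949523721754591847001568,
6091991003603948412176771817796589792,
29595391719616511440344204525578660416,
32591667392437709036775797213872852512,
13595706613389852845402163615921574144,
16846591924347553332009631882757551360,
7421339224417854053873465614545247520,
32712428937089595288825918305678596480,
25468358353027673322348116525228410560,
26887812423210803819944169449180039840,
4883809228922688347713865756842611168,
18055820768919086001737460589456377056,
22652222178177569117597520714204196000,
3292624443894235585076912412719582432,
4201428401134708016721990223057913888,
26968171690251443045661983506808552000,
32318463713812806553843883048930709184,
30105737925348132734875429866004677696,
18224246466771795125379014291750273344,
3642739046148058313237275639907737728,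
31956381936912114781301922829248699104,
28435312228995930087096720904078729632,
8148868284806563044323335796145391648,
15565306366366721493267188062442900512,
19593743649603090183681871896058646688,
22290839335659159802749821776300459104,
26278600686837405830638534035010597056,
10166569988255892892908467281288516672,
28046417564369697551555121976113938048,
29717694115233426007037617127700956768,
20040572995288171305197085094736108640,
12825388397917278143361017225685518784]

private def caseII_g0 : ℕ := 28776625136163191153434589137920597088
private def caseII_g1 : ℕ := 31595925856368016379931805506578056256
private def caseII_idN : ℕ := 32886290143373735477794918486186756128

private def caseII_genN (b : Bool) : ℕ := if b then caseII_g1 else caseII_g0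

private def caseII_gen (b : Bool) : Equiv.Perm (Fin 25) :=
  if b then caseII_σ₁ else caseII_σ₀

/-- digit `i` of `n` in base 32. -/
private def appN : ℕ → ℕ → ℕ
  | n, 0 => n % 32
  | n, i + 1 => appN (n / 32) i

private def compGo (f g : ℕ) : ℕ → ℕ → ℕ
  | 0, _ => 0
  | k + 1, i => appN f (appN g i) + 32 * compGo f g (k) (i + 1)

/-- code of the composite `f ∘ g` (first `g`, then `f`). -/
private def compN (f g : ℕ) : ℕ := compGo f g 25 0

private def pow32 : ℕ → ℕ
  | 0 => 1
  | k + 1 => 32 * pow32 k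

private lemma appN_lt (i : ℕ) : ∀ n, appN n i < 32 := by
  induction i with
  | zero => intro n; exact Nat.mod_lt _ (by norm_num)
  | succ i ih => intro n; exact ih _

private lemma appN_compGo (f g : ℕ) :
    ∀ k i j, j < k → appN (compGo f g k i) j = appN f (appN g (i + j)) := by
  intro k
  induction k with
  | zero => intro i j h; omega
  | succ k ih =>
    intro i j h
    cases j with
    | zero =>
      show appN (appN f (appN g i) + 32 * compGo f g k (i + 1)) 0 = _
      show (appN f (appN g i) + 32 * compGo f g k (i + 1)) % 32 = _
      rw [Nat.add_mul_mod_self_left, Nat.mod_eq_of_lt (appN_lt _ _), Nat.add_zero]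
    | succ j =>
      show appN ((appN f (appN g i) + 32 * compGo f g k (i + 1)) / 32) j = _
      have hd : (appN f (appN g i) + 32 * compGo f g k (i + 1)) / 32
          = compGo f g k (i + 1) := by
        have := appN_lt 0 g  -- dummy
        have h32 : appN f (appN g i) < 32 := appN_lt _ _
        omega
      rw [show i + (j + 1) = (i + 1) + j from by omega, hd]
      exact ih (i + 1) j (by omega)

private lemma appN_compN (f g : ℕ) (j : ℕ) (h : j < 25) :
    appN (compN f g) j = appN f (appN g j) := by
  have := appN_compGo f g 25 0 j h
  simpa [compN] using this

private lemma compGo_lt (f g : ℕ) : ∀ k i, compGo f g k i < pow32 k := by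
  intro k
  induction k with
  | zero => intro i; simp [compGo, pow32]
  | succ k ih =>
    intro i
    have h1 : appN f (appN g i) < 32 := appN_lt _ _
    have h2 : compGo f g k (i + 1) < pow32 k := ih _
    show appN f (appN g i) + 32 * compGo f g k (i + 1) < 32 * pow32 k
    calc appN f (appN g i) + 32 * compGo f g k (i + 1)
        < 32 * (compGo f g k (i + 1) + 1) := by omega
      _ ≤ 32 * pow32 k := Nat.mul_le_mul_left _ (by omega)

private lemma compN_lt (f g : ℕ) : compN f g < pow32 25 := compGo_lt f g 25 0

private lemma digits_inj : ∀ (k a b : ℕ), a < pow32 k → b < pow32 k →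
    (∀ j, j < k → appN a j = appN b j) → a = b := by
  intro k
  induction k with
  | zero =>
    intro a b ha hb _
    simp [pow32] at ha hb
    omega
  | succ k ih =>
    intro a b ha hb h
    have h0 : a % 32 = b % 32 := h 0 (Nat.succ_pos _)
    have hd : a / 32 = b / 32 := by
      apply ih
      · rw [Nat.div_lt_iff_lt_mul (by norm_num : (0:ℕ) < 32)]
        calc a < 32 * pow32 k := ha
          _ = pow32 k * 32 := Nat.mul_comm _ _
      · rw [Nat.div_lt_iff_lt_mul (by norm_num : (0:ℕ) < 32)]
        calc b < 32 * pow32 k := hb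
          _ = pow32 k * 32 := Nat.mul_comm _ _
      · intro j hj
        exact h (j + 1) (Nat.succ_lt_succ hj)
    omega

private def caseII_evalN : List Bool → ℕ
  | [] => caseII_idN
  | b :: w => compN (caseII_genN b) (caseII_evalN w)

private def caseII_eval (w : List Bool) : Equiv.Perm (Fin 25) :=
  (w.map caseII_gen).prod

private def caseII_T : Finset (Equiv.Perm (Fin 25)) :=
  (caseII_words.map caseII_eval).toFinset

private lemma caseII_evalN_lt (w : List Bool) : caseII_evalN w < pow32 25 := by
  cases w with
  | nil => show caseII_idN < pow32 25; decide
  | cons b w => exact compN_lt _ _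

-- decided computational facts
set_option maxRecDepth 100000 in
set_option maxHeartbeats 4000000 in
private lemma caseII_dGen : ∀ (b : Bool) (i : Fin 25),
    ((caseII_gen b i : ℕ)) = appN (caseII_genN b) i := by decide

set_option maxRecDepth 100000 in
set_option maxHeartbeats 4000000 in
private lemma caseII_dId : ∀ j, j < 25 → appN caseII_idN j = j := by decide

set_option maxRecDepth 100000 in
set_option maxHeartbeats 4000000 in
private lemma caseII_dA : caseII_words.map caseII_evalN = caseII_VN := by decide

set_option maxRecDepth 100000 in
set_option maxHeartbeats 4000000 in
private lemma caseII_dNodup : caseII_VN.Nodup := by decide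

set_option maxRecDepth 100000 in
set_option maxHeartbeats 4000000 in
private lemma caseII_dLen : caseII_words.length = 288 := by decide

set_option maxRecDepth 100000 in
set_option maxHeartbeats 4000000 in
private lemma caseII_dStep : ∀ v ∈ caseII_VN,
    compN v caseII_g0 ∈ caseII_VN ∧ compN v caseII_g1 ∈ caseII_VN := by decide

set_option maxRecDepth 100000 in
set_option maxHeartbeats 4000000 in
private lemma caseII_dCV : ∀ v ∈ caseII_VN,
    (∀ u ∈ caseII_VN, compN v u = compN u v) → v = caseII_idN := by decide

-- pointwise correspondence
private lemma caseII_lemB (w : List Bool) (i : Fin 25) :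
    ((caseII_eval w) i : ℕ) = appN (caseII_evalN w) i := by
  induction w with
  | nil =>
    rw [show caseII_eval [] = 1 from rfl, show caseII_evalN [] = caseII_idN from rfl,
      Equiv.Perm.one_apply, caseII_dId i i.isLt]
  | cons b w ih =>
    have h1 : caseII_eval (b :: w) i = caseII_gen b (caseII_eval w i) := by
      simp [caseII_eval, List.prod_cons]
    rw [h1, caseII_dGen b (caseII_eval w i)]
    show appN (caseII_genN b) ((caseII_eval w i : ℕ)) = _
    rw [ih, show caseII_evalN (b :: w) = compN (caseII_genN b) (caseII_evalN w) from rfl,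
      appN_compN _ _ _ i.isLt]

private lemma caseII_lemMul (w w' : List Bool) (i : Fin 25) :
    ((caseII_eval w * caseII_eval w') i : ℕ) =
      appN (compN (caseII_evalN w) (caseII_evalN w')) i := by
  rw [Equiv.Perm.mul_apply, caseII_lemB w (caseII_eval w' i)]
  show appN (caseII_evalN w) ((caseII_eval w' i : ℕ)) = _
  rw [caseII_lemB w' i, appN_compN _ _ _ i.isLt]

private lemma caseII_lemPeq (w w' : List Bool) (h : caseII_evalN w = caseII_evalN w') :
    caseII_eval w = caseII_eval w' := by
  apply Equiv.ext
  intro i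
  apply Fin.ext
  rw [caseII_lemB, caseII_lemB, h]

private lemma caseII_lemVeq (w w' : List Bool) (h : caseII_eval w = caseII_eval w') :
    caseII_evalN w = caseII_evalN w' := by
  apply digits_inj 25 _ _ (caseII_evalN_lt w) (caseII_evalN_lt w')
  intro j hj
  rw [← caseII_lemB w ⟨j, hj⟩, ← caseII_lemB w' ⟨j, hj⟩, h]

private lemma caseII_memVN (w : List Bool) (hw : w ∈ caseII_words) :
    caseII_evalN w ∈ caseII_VN := by
  rw [← caseII_dA]; exact List.mem_map_of_mem hw

-- the four key facts about T
private lemma caseII_fact1 : (1 : Equiv.Perm (Fin 25)) ∈ caseII_T := by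
  rw [caseII_T, List.mem_toFinset, List.mem_map]
  exact ⟨[], by decide, rfl⟩

private lemma caseII_fact2 : ∀ t ∈ caseII_T,
    t * caseII_σ₀ ∈ caseII_T ∧ t * caseII_σ₁ ∈ caseII_T := by
  intro t ht
  rw [caseII_T, List.mem_toFinset, List.mem_map] at ht
  obtain ⟨w, hw, rfl⟩ := ht
  have key : ∀ b : Bool, caseII_eval w * caseII_gen b ∈ caseII_T := by
    intro b
    have hv := caseII_memVN w hw
    have hst : compN (caseII_evalN w) (caseII_genN b) ∈ caseII_VN := by
      cases b
      · exact (caseII_dStep _ hv).1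
      · exact (caseII_dStep _ hv).2
    rw [← caseII_dA, List.mem_map] at hst
    obtain ⟨w', hw', he⟩ := hst
    rw [caseII_T, List.mem_toFinset, List.mem_map]
    refine ⟨w', hw', ?_⟩
    apply Equiv.ext
    intro i
    apply Fin.ext
    rw [caseII_lemB w' i, he, Equiv.Perm.mul_apply, caseII_lemB w (caseII_gen b i)]
    show _ = appN (caseII_evalN w) ((caseII_gen b i : ℕ))
    rw [caseII_dGen b i, appN_compN _ _ _ i.isLt]

  exact ⟨key false, key true⟩

private lemma caseII_fact3 : caseII_T.card = 288 := by
  have hnd : (caseII_words.map caseII_eval).Nodup := by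
    have h1 : (caseII_words.map caseII_evalN).Nodup := by
      rw [caseII_dA]; exact caseII_dNodup
    rw [List.Nodup, List.pairwise_map] at h1 ⊢
    refine h1.imp ?_
    intro a b hne he
    exact hne (caseII_lemVeq a b he)
  rw [caseII_T, List.toFinset_card_of_nodup hnd, List.length_map, caseII_dLen]

private lemma caseII_fact4 : ∀ g ∈ caseII_T,
    (∀ h ∈ caseII_T, g * h = h * g) → g = 1 := by
  intro g hg hcomm
  rw [caseII_T, List.mem_toFinset, List.mem_map] at hg
  obtain ⟨w, hw, rfl⟩ := hg
  have hid : caseII_evalN w = caseII_idN := by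
    apply caseII_dCV _ (caseII_memVN w hw)
    intro u hu
    have hu' := hu
    rw [← caseII_dA, List.mem_map] at hu'
    obtain ⟨w', hw', rfl⟩ := hu'
    have hT : caseII_eval w' ∈ caseII_T := by
      rw [caseII_T, List.mem_toFinset, List.mem_map]; exact ⟨w', hw', rfl⟩
    have hc := hcomm _ hT
    apply digits_inj 25 _ _ (compN_lt _ _) (compN_lt _ _)
    intro j hj
    rw [← caseII_lemMul w w' ⟨j, hj⟩, ← caseII_lemMul w' w ⟨j, hj⟩, hc]
  apply Equiv.ext
  intro i
  apply Fin.ext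
  rw [caseII_lemB w i, hid, caseII_dId i i.isLt, Equiv.Perm.one_apply]

private def caseII_S : Subgroup (Equiv.Perm (Fin 25)) where
  carrier := {g | ∀ t ∈ caseII_T, t * g ∈ caseII_T}
  mul_mem' := by
    intro a b ha hb t ht
    rw [← mul_assoc]
    exact hb _ (ha _ ht)
  one_mem' := by intro t ht; simpa using ht
  inv_mem' := by
    intro g hg t ht
    have himg : Finset.image (· * g) caseII_T = caseII_T := by
      apply Finset.eq_of_subset_of_card_le
      · intro x hx
        simp only [Finset.mem_image] at hx
        obtain ⟨s, hs, rfl⟩ := hx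
        exact hg _ hs
      · rw [Finset.card_image_of_injective _ (mul_left_injective g)]
    rw [← himg] at ht
    simp only [Finset.mem_image] at ht
    obtain ⟨s, hs, rfl⟩ := ht
    simpa [mul_assoc] using hs

private lemma caseII_T_sub : (caseII_T : Set (Equiv.Perm (Fin 25))) ⊆ caseII_G := by
  intro x hx
  simp only [caseII_T, Finset.mem_coe, List.mem_toFinset, List.mem_map] at hx
  obtain ⟨w, -, rfl⟩ := hx
  refine Subgroup.list_prod_mem _ ?_
  intro p hp
  simp only [List.mem_map] at hp
  obtain ⟨b, -, rfl⟩ := hp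
  cases b
  · exact Subgroup.subset_closure (Or.inl rfl)
  · exact Subgroup.subset_closure (Or.inr rfl)

private lemma caseII_carrier : (caseII_G : Set (Equiv.Perm (Fin 25))) = ↑caseII_T := by
  apply Set.Subset.antisymm
  · intro g hg
    have hle : caseII_G ≤ caseII_S := by
      rw [caseII_G, Subgroup.closure_le]
      rintro x (rfl | rfl)
      · exact fun t ht => (caseII_fact2 t ht).1
      · exact fun t ht => (caseII_fact2 t ht).2
    have h := hle hg 1 caseII_fact1
    simpa using h
  · exact caseII_T_sub

/-- The monodromy group of case II has order `288` and trivial center. -/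
theorem caseII_monodromy_group_card_and_center :
    Nat.card caseII_G = 288 ∧ Subgroup.center caseII_G = ⊥ := by
  constructor
  · have h1 : Nat.card caseII_G = Nat.card (caseII_T : Set (Equiv.Perm (Fin 25))) :=
      Nat.card_congr (Equiv.setCongr caseII_carrier)
    rw [h1, Nat.card_coe_set_eq, Set.ncard_coe_finset, caseII_fact3]
  · rw [eq_bot_iff]
    rintro ⟨g, hg⟩ hz
    have hgT : g ∈ caseII_T := by
      have h2 : g ∈ (caseII_G : Set (Equiv.Perm (Fin 25))) := hg
      rw [caseII_carrier] at h2
      simpa using h2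
    have hcomm : ∀ h ∈ caseII_T, g * h = h * g := by
      intro h hh
      have hhG : h ∈ caseII_G := caseII_T_sub hh
      have := (Subgroup.mem_center_iff.mp hz) ⟨h, hhG⟩
      exact (Subtype.ext_iff.mp this).symm
    have := caseII_fact4 g hgT hcomm
    simpa [Subgroup.mem_bot, Subtype.ext_iff] using this
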